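/- If f : I → ℝ solves the restricted Cauchy equation f(x+x') = f(x)+f(x') for all x, x', x+x' ∈ I and f is not of the form f(x) = c·x for any c ∈ ℝ, then the graph of f is everywhere dense in I × ℝ. -/

import Mathlib

open Set

private lemma cauchy_zero {I : Set ℝ} (h0 : (0:ℝ) ∈ I) {f : ℝ → ℝ}
    (hadd : ∀ x ∈ I, ∀ x' ∈ I, x + x' ∈ I → f (x + x') = f x + f x') :
    f 0 = 0 := by
  have h := hadd 0 h0 0 h0 (by simpa using h0)
  rw [add_zero] at h
  linarith

private lemma cauchy_nat {I : Set ℝ} (hI : I.OrdConnected) (h0 : (0:ℝ) ∈ I) {f : ℝ → ℝ}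
    (hadd : ∀ x ∈ I, ∀ x' ∈ I, x + x' ∈ I → f (x + x') = f x + f x') :
    ∀ (n : ℕ) (t : ℝ), t ∈ I → (n:ℝ) * t ∈ I → f ((n:ℝ)*t) = n * f t := by
  intro n
  induction n with
  | zero => intro t ht hnt; simp [cauchy_zero h0 hadd]
  | succ n ih =>
    intro t ht hnt
    have hmem : (n:ℝ)*t ∈ I := by
      apply hI.uIcc_subset h0 hnt
      rcases le_total 0 t with h|h
      · refine mem_uIcc.2 (Or.inl ⟨by positivity, by push_cast; nlinarith⟩)
      · refine mem_uIcc.2 (Or.inr ⟨by push_cast; nlinarith, by nlinarith⟩)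
    have heq : ((n+1:ℕ):ℝ)*t = (n:ℝ)*t + t := by push_cast; ring
    rw [heq, hadd _ hmem _ ht (heq ▸ hnt), ih t ht hmem]
    push_cast; ring

private lemma cauchy_rat {I : Set ℝ} (hI : I.OrdConnected) (h0 : (0:ℝ) ∈ I) {f : ℝ → ℝ}
    (hadd : ∀ x ∈ I, ∀ x' ∈ I, x + x' ∈ I → f (x + x') = f x + f x')
    (q : ℚ) (hq : 0 ≤ q) (t : ℝ) (ht : t ∈ I) (hqt : (q:ℝ) * t ∈ I) :
    f ((q:ℝ)*t) = (q:ℝ) * f t := by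
  set n : ℕ := q.den with hn
  set m : ℕ := q.num.toNat with hm
  have hnpos : (0:ℝ) < (n:ℝ) := by exact_mod_cast q.pos
  have hmz : (m:ℤ) = q.num := Int.toNat_of_nonneg (Rat.num_nonneg.2 hq)
  have hmcast : (m:ℝ) = ((q.num:ℤ):ℝ) := by exact_mod_cast hmz
  have hn1 : (1:ℝ) ≤ (n:ℝ) := by exact_mod_cast q.pos
  have hqcast : (q:ℝ) = (m:ℝ) / (n:ℝ) := by
    rw [Rat.cast_def]
    congr 1
    exact hmcast.symm
  have htn : t / n ∈ I := by
    apply hI.uIcc_subset h0 ht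
    rcases le_total 0 t with h|h
    · refine mem_uIcc.2 (Or.inl ⟨by positivity, ?_⟩)
      rw [div_le_iff₀ hnpos]; nlinarith
    · refine mem_uIcc.2 (Or.inr ⟨?_, by rw [div_le_iff₀ hnpos]; nlinarith⟩)
      rw [le_div_iff₀ hnpos]; nlinarith
  have hnt : (n:ℝ) * (t / n) = t := by field_simp
  have h1 : f t = n * f (t/n) := by
    have h1' := cauchy_nat hI h0 hadd n (t/n) htn (by rw [hnt]; exact ht)
    rw [hnt] at h1'; exact h1'
  have hmt : (m:ℝ) * (t/n) = (q:ℝ) * t := by rw [hqcast]; field_simp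
  have h2 : f ((q:ℝ)*t) = m * f (t/n) := by
    have h2' := cauchy_nat hI h0 hadd m (t/n) htn (by rw [hmt]; exact hqt)
    rw [hmt] at h2'; exact h2'
  rw [h2, hqcast]
  field_simp
  nlinarith [h1]

set_option maxHeartbeats 1000000 in
private lemma cauchy_key (I : Set ℝ) (hI : I.OrdConnected)
    (h0 : (0 : ℝ) ∈ I) (f : ℝ → ℝ)
    (hadd : ∀ x ∈ I, ∀ x' ∈ I, x + x' ∈ I → f (x + x') = f x + f x')
    (hnl : ¬ ∃ c : ℝ, ∀ x ∈ I, f x = c * x)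
    (x₀ : ℝ) (hx₀I : x₀ ∈ I) (hx₀ : 0 < x₀) :
    I ×ˢ (Set.univ : Set ℝ) ⊆ closure {p : ℝ × ℝ | p.1 ∈ I ∧ p.2 = f p.1} := by
  have mem01 : ∀ {y : ℝ}, 0 ≤ y → y ≤ x₀ → y ∈ I := fun hy0 hy1 =>
    hI.uIcc_subset h0 hx₀I (mem_uIcc.2 (Or.inl ⟨hy0, hy1⟩))
  set c₀ : ℝ := f x₀ / x₀ with hc₀
  have hlin0 : f x₀ = c₀ * x₀ := by rw [hc₀, div_mul_cancel₀ _ (ne_of_gt hx₀)]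
  -- find a point where f is not linear with slope c₀, inside (0, x₀]
  obtain ⟨u, huI, hu0, hux, hune⟩ : ∃ u, u ∈ I ∧ 0 < u ∧ u ≤ x₀ ∧ f u ≠ c₀ * u := by
    by_contra hcon
    push_neg at hcon
    refine hnl ⟨c₀, fun x hx => ?_⟩
    rcases lt_trichotomy x 0 with hx0|hx0|hx0
    · obtain ⟨n, hn⟩ := exists_nat_gt (-x / x₀)
      have hnpos : 0 < (n:ℝ) := lt_of_le_of_lt (div_nonneg (by linarith) hx₀.le) hn
      have hn1 : (1:ℝ) ≤ (n:ℝ) := by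
        have h' : 1 ≤ n := Nat.one_le_iff_ne_zero.2 (fun h => by simp [h] at hnpos)
        exact_mod_cast h'
      set t := x / n with htdef
      have htneg : t < 0 := div_neg_of_neg_of_pos hx0 hnpos
      have htI : t ∈ I := by
        apply hI.uIcc_subset h0 hx
        refine mem_uIcc.2 (Or.inr ⟨?_, le_of_lt htneg⟩)
        rw [le_div_iff₀ hnpos]; nlinarith
      have htgt : -x₀ < t := by
        rw [div_lt_iff₀ hx₀] at hn
        rw [htdef, lt_div_iff₀ hnpos]; nlinarith
      have hwI : t + x₀ ∈ I := mem01 (by linarith) (by linarith)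
      have hw : f (t + x₀) = f t + f x₀ := hadd t htI x₀ hx₀I hwI
      have hwv : f (t + x₀) = c₀ * (t + x₀) := hcon _ hwI (by linarith) (by linarith)
      have hft : f t = c₀ * t := by rw [hlin0] at hw; nlinarith [hw, hwv]
      have hnt : (n:ℝ) * t = x := by rw [htdef, mul_div_cancel₀ _ (ne_of_gt hnpos)]
      have := cauchy_nat hI h0 hadd n t htI (by rw [hnt]; exact hx)
      rw [hnt, hft] at this
      have hn0 : (n:ℝ) ≠ 0 := ne_of_gt hnpos
      rw [this, htdef]; field_simp
    · rw [hx0, cauchy_zero h0 hadd]; ring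
    · obtain ⟨n, hn⟩ := exists_nat_gt (x / x₀)
      have hnpos : 0 < (n:ℝ) := lt_of_le_of_lt (div_nonneg hx0.le hx₀.le) hn
      have hn1 : (1:ℝ) ≤ (n:ℝ) := by
        have h' : 1 ≤ n := Nat.one_le_iff_ne_zero.2 (fun h => by simp [h] at hnpos)
        exact_mod_cast h'
      set t := x / n with htdef
      have htpos : 0 < t := div_pos hx0 hnpos
      have htI : t ∈ I := by
        apply hI.uIcc_subset h0 hx
        refine mem_uIcc.2 (Or.inl ⟨le_of_lt htpos, ?_⟩)
        rw [div_le_iff₀ hnpos]; nlinarith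
      have htle : t ≤ x₀ := by
        rw [div_lt_iff₀ hx₀] at hn
        rw [htdef, div_le_iff₀ hnpos]; nlinarith
      have hft : f t = c₀ * t := hcon t htI htpos htle
      have hnt : (n:ℝ) * t = x := by rw [htdef, mul_div_cancel₀ _ (ne_of_gt hnpos)]
      have := cauchy_nat hI h0 hadd n t htI (by rw [hnt]; exact hx)
      rw [hnt, hft] at this
      have hn0 : (n:ℝ) ≠ 0 := ne_of_gt hnpos
      rw [this, htdef]; field_simp
  set r : ℝ := f u / u with hr
  have hru : f u = r * u := by rw [hr, div_mul_cancel₀ _ (ne_of_gt hu0)]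
  have hd : r - c₀ ≠ 0 := by
    intro h
    apply hune
    have : r = c₀ := by linarith [sub_eq_zero.1 h]
    rw [← this, hru]
  set K : ℝ := x₀ * (r - c₀) with hKdef
  have hK : K ≠ 0 := mul_ne_zero (ne_of_gt hx₀) hd
  have hKabs : 0 < |K| := abs_pos.2 hK
  set P : ℝ → Prop := fun y => ∀ ε > (0:ℝ), ∃ t, t ∈ I ∧ 0 ≤ t ∧ t ≤ x₀ ∧ t < ε ∧ |f t - y| < ε
    with hPdef
  have hP0 : P 0 := by
    intro ε hε
    exact ⟨0, h0, le_refl _, hx₀.le, hε, by simp [cauchy_zero h0 hadd, hε]⟩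
  have hPadd : ∀ y z, P y → P z → P (y + z) := by
    intro y z hy hz ε hε
    have hε' : 0 < min (ε/2) (x₀/2) := by positivity
    obtain ⟨t₁, h1I, h10, h1x, h1ε, h1f⟩ := hy _ hε'
    obtain ⟨t₂, h2I, h20, h2x, h2ε, h2f⟩ := hz _ hε'
    have hm1 := min_le_left (ε/2) (x₀/2)
    have hm2 := min_le_right (ε/2) (x₀/2)
    have hsI : t₁ + t₂ ∈ I := mem01 (by linarith) (by linarith)
    refine ⟨t₁ + t₂, hsI, by linarith, by linarith, by linarith, ?_⟩
    rw [hadd t₁ h1I t₂ h2I hsI]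
    calc |f t₁ + f t₂ - (y + z)| = |(f t₁ - y) + (f t₂ - z)| := by ring_nf
      _ ≤ |f t₁ - y| + |f t₂ - z| := abs_add_le _ _
      _ < ε := by linarith
  have hPnat : ∀ c, P c → ∀ n : ℕ, P ((n:ℝ) * c) := by
    intro c hc n
    induction n with
    | zero => simpa using hP0
    | succ n ih =>
      have h := hPadd _ _ ih hc
      have : ((n:ℕ):ℝ) * c + c = ((n+1:ℕ):ℝ)*c := by push_cast; ring
      rwa [this] at h
  have hr1 : (0:ℝ) < |r| + 1 := by positivity
  have hK1 : (0:ℝ) < |K| + 1 := by positivity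
  have stepP : ∀ θ : ℝ, 0 < θ → θ ≤ 1 → P (θ * K) := by
    intro θ hθ0 hθ1 ε hε
    set ε₂ := min (θ/2) (ε / (2*(|K|+1))) with hε₂def
    have hε₂pos : 0 < ε₂ := by positivity
    have hε₂θ : ε₂ ≤ θ/2 := min_le_left _ _
    have hε₂K : ε₂ ≤ ε / (2*(|K|+1)) := min_le_right _ _
    obtain ⟨β, hβ1, hβ2⟩ := exists_rat_btwn (show θ - ε₂ < θ by linarith)
    have hβ0 : 0 < (β:ℝ) := by linarith
    have hβ0' : 0 ≤ β := by exact_mod_cast hβ0.le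
    have hβlt1 : (β:ℝ) < 1 := lt_of_lt_of_le hβ2 hθ1
    set ε₃ := min (min ε ((1 - (β:ℝ))*x₀)) (ε/(2*(|r|+1))) with hε₃def
    have hε₃pos : 0 < ε₃ := by
      refine lt_min (lt_min hε ?_) (by positivity)
      exact mul_pos (by linarith) hx₀
    have hε₃a : ε₃ ≤ ε := le_trans (min_le_left _ _) (min_le_left _ _)
    have hε₃b : ε₃ ≤ (1 - (β:ℝ))*x₀ := le_trans (min_le_left _ _) (min_le_right _ _)
    have hε₃c : ε₃ ≤ ε/(2*(|r|+1)) := min_le_right _ _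
    have hβxnn : (0:ℝ) ≤ (β:ℝ)*x₀ := by positivity
    obtain ⟨α, hα1, hα2⟩ := exists_rat_btwn
      (show (β:ℝ)*x₀/u < ((β:ℝ)*x₀ + ε₃)/u from by
        rw [div_lt_div_iff₀ hu0 hu0]
        exact mul_lt_mul_of_pos_right (by linarith) hu0)
    have hαu1 : (β:ℝ)*x₀ < (α:ℝ)*u := by rwa [div_lt_iff₀ hu0] at hα1
    have hαu2 : (α:ℝ)*u < (β:ℝ)*x₀ + ε₃ := by rwa [lt_div_iff₀ hu0] at hα2
    have hα0 : 0 ≤ α := by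
      have h' : (0:ℝ) < (α:ℝ) := lt_of_le_of_lt (by positivity) hα1
      exact_mod_cast h'.le
    set t := (α:ℝ)*u - (β:ℝ)*x₀ with htdef
    have ht0 : 0 ≤ t := by rw [htdef]; linarith
    have htε : t < ε₃ := by rw [htdef]; linarith
    have hαux : (α:ℝ)*u ≤ x₀ := by linarith only [hαu2, hε₃b]
    have htx : t ≤ x₀ := by rw [htdef]; linarith
    have hβxI : (β:ℝ)*x₀ ∈ I := mem01 hβxnn (by
      have h' := mul_le_mul_of_nonneg_right hβlt1.le hx₀.le
      linarith only [h'])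
    have hαuI : (α:ℝ)*u ∈ I := mem01 (le_trans hβxnn hαu1.le) hαux
    have htI : t ∈ I := mem01 ht0 htx
    have hfαu : f ((α:ℝ)*u) = (α:ℝ) * f u := cauchy_rat hI h0 hadd α hα0 u huI hαuI
    have hfβx : f ((β:ℝ)*x₀) = (β:ℝ) * f x₀ := cauchy_rat hI h0 hadd β hβ0' x₀ hx₀I hβxI
    have hsum : t + (β:ℝ)*x₀ = (α:ℝ)*u := by rw [htdef]; ring
    have hsplit := hadd t htI _ hβxI (by rw [hsum]; exact hαuI)
    rw [hsum, hfαu, hfβx] at hsplit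
    have hft : f t = t * r + (β:ℝ) * K := by
      have h4 : f t = (α:ℝ) * f u - (β:ℝ) * f x₀ := by linarith
      have h5 : (α:ℝ)*u = t + (β:ℝ)*x₀ := hsum.symm
      rw [h4, hru, hlin0, hKdef]
      linear_combination r * h5
    refine ⟨t, htI, ht0, htx, lt_of_lt_of_le htε hε₃a, ?_⟩
    have habs : |f t - θ*K| ≤ |t| * |r| + |(β:ℝ)-θ| * |K| := by
      rw [hft]
      calc |t * r + (β:ℝ)*K - θ*K| = |t*r + ((β:ℝ)-θ)*K| := by ring_nf
        _ ≤ |t * r| + |((β:ℝ)-θ) * K| := abs_add_le _ _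
        _ = |t| * |r| + |(β:ℝ)-θ| * |K| := by rw [abs_mul, abs_mul]
    have h6 : |t| < ε₃ := by rw [abs_of_nonneg ht0]; exact htε
    have h7 : |(β:ℝ)-θ| < ε₂ := by
      rw [abs_of_neg (by linarith : (β:ℝ)-θ < 0)]; linarith
    have hc1 : ε₃ * (2*(|r|+1)) ≤ ε := by
      rw [← le_div_iff₀ (by positivity)]; exact hε₃c
    have hc2 : ε₂ * (2*(|K|+1)) ≤ ε := by
      rw [← le_div_iff₀ (by positivity)]; exact hε₂K
    have p1 : |t| * (|r|+1) < ε₃ * (|r|+1) := mul_lt_mul_of_pos_right h6 hr1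
    have p2 : |(β:ℝ)-θ| * (|K|+1) < ε₂ * (|K|+1) := mul_lt_mul_of_pos_right h7 hK1
    have e1 : |t| * |r| < ε/2 := by linarith only [p1, hc1, abs_nonneg t]
    have e2 : |(β:ℝ)-θ| * |K| < ε/2 := by linarith only [p2, hc2, abs_nonneg ((β:ℝ)-θ)]
    linarith [habs]
  have stepM : ∀ θ : ℝ, 0 < θ → θ ≤ 1 → P (-(θ * K)) := by
    intro θ hθ0 hθ1 ε hε
    set ε₂ := min (θ/2) (ε / (2*(|K|+1))) with hε₂def
    have hε₂pos : 0 < ε₂ := by positivity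
    have hε₂θ : ε₂ ≤ θ/2 := min_le_left _ _
    have hε₂K : ε₂ ≤ ε / (2*(|K|+1)) := min_le_right _ _
    obtain ⟨β, hβ1, hβ2⟩ := exists_rat_btwn (show θ - ε₂ < θ by linarith)
    have hβ0 : 0 < (β:ℝ) := by linarith
    have hβ0' : 0 ≤ β := by exact_mod_cast hβ0.le
    have hβle1 : (β:ℝ) ≤ 1 := le_of_lt (lt_of_lt_of_le hβ2 hθ1)
    set ε₃ := min ε (ε/(2*(|r|+1))) with hε₃def
    have hε₃pos : 0 < ε₃ := by positivity
    have hε₃a : ε₃ ≤ ε := min_le_left _ _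
    have hε₃c : ε₃ ≤ ε/(2*(|r|+1)) := min_le_right _ _
    have hβxpos : (0:ℝ) < (β:ℝ)*x₀ := mul_pos hβ0 hx₀
    have hL : max (((β:ℝ)*x₀ - ε₃)/u) 0 < (β:ℝ)*x₀/u := by
      refine max_lt ?_ (div_pos hβxpos hu0)
      rw [div_lt_div_iff₀ hu0 hu0]
      exact mul_lt_mul_of_pos_right (by linarith) hu0
    obtain ⟨α, hα1, hα2⟩ := exists_rat_btwn hL
    have hα0 : 0 ≤ α := by
      have h' : (0:ℝ) ≤ (α:ℝ) := le_trans (le_max_right _ _) hα1.le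
      exact_mod_cast h'
    have hαu2 : (α:ℝ)*u < (β:ℝ)*x₀ := by rwa [lt_div_iff₀ hu0] at hα2
    have hαu1 : (β:ℝ)*x₀ - ε₃ < (α:ℝ)*u := by
      have h' : ((β:ℝ)*x₀ - ε₃)/u < (α:ℝ) := lt_of_le_of_lt (le_max_left _ _) hα1
      rwa [div_lt_iff₀ hu0] at h'
    have hαunn : (0:ℝ) ≤ (α:ℝ)*u := mul_nonneg (by exact_mod_cast hα0) hu0.le
    set t := (β:ℝ)*x₀ - (α:ℝ)*u with htdef
    have ht0 : 0 ≤ t := by rw [htdef]; linarith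
    have htε : t < ε₃ := by rw [htdef]; linarith
    have hβxle : (β:ℝ)*x₀ ≤ x₀ := by
      have h' := mul_le_mul_of_nonneg_right hβle1 hx₀.le
      linarith only [h']
    have htx : t ≤ x₀ := by rw [htdef]; linarith
    have hβxI : (β:ℝ)*x₀ ∈ I := mem01 hβxpos.le hβxle
    have hαuI : (α:ℝ)*u ∈ I := mem01 hαunn (by linarith)
    have htI : t ∈ I := mem01 ht0 htx
    have hfαu : f ((α:ℝ)*u) = (α:ℝ) * f u := cauchy_rat hI h0 hadd α hα0 u huI hαuI
    have hfβx : f ((β:ℝ)*x₀) = (β:ℝ) * f x₀ := cauchy_rat hI h0 hadd β hβ0' x₀ hx₀I hβxI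
    have hsum : t + (α:ℝ)*u = (β:ℝ)*x₀ := by rw [htdef]; ring
    have hsplit := hadd t htI _ hαuI (by rw [hsum]; exact hβxI)
    rw [hsum, hfαu, hfβx] at hsplit
    have hft : f t = t * r - (β:ℝ) * K := by
      have h4 : f t = (β:ℝ) * f x₀ - (α:ℝ) * f u := by linarith
      have h5 : (α:ℝ)*u = (β:ℝ)*x₀ - t := by rw [htdef]; ring
      rw [h4, hru, hlin0, hKdef]
      linear_combination (-r) * h5
    refine ⟨t, htI, ht0, htx, lt_of_lt_of_le htε hε₃a, ?_⟩
    have habs : |f t - (-(θ*K))| ≤ |t| * |r| + |θ-(β:ℝ)| * |K| := by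
      rw [hft]
      calc |t * r - (β:ℝ)*K - (-(θ*K))| = |t*r + (θ-(β:ℝ))*K| := by ring_nf
        _ ≤ |t * r| + |(θ-(β:ℝ)) * K| := abs_add_le _ _
        _ = |t| * |r| + |θ-(β:ℝ)| * |K| := by rw [abs_mul, abs_mul]
    have h6 : |t| < ε₃ := by rw [abs_of_nonneg ht0]; exact htε
    have h7 : |θ-(β:ℝ)| < ε₂ := by
      rw [abs_of_pos (by linarith : (0:ℝ) < θ-(β:ℝ))]; linarith
    have hc1 : ε₃ * (2*(|r|+1)) ≤ ε := by
      rw [← le_div_iff₀ (by positivity)]; exact hε₃c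
    have hc2 : ε₂ * (2*(|K|+1)) ≤ ε := by
      rw [← le_div_iff₀ (by positivity)]; exact hε₂K
    have p1 : |t| * (|r|+1) < ε₃ * (|r|+1) := mul_lt_mul_of_pos_right h6 hr1
    have p2 : |θ-(β:ℝ)| * (|K|+1) < ε₂ * (|K|+1) := mul_lt_mul_of_pos_right h7 hK1
    have e1 : |t| * |r| < ε/2 := by linarith only [p1, hc1, abs_nonneg t]
    have e2 : |θ-(β:ℝ)| * |K| < ε/2 := by linarith only [p2, hc2, abs_nonneg (θ-(β:ℝ))]
    linarith [habs]
  have hPall : ∀ y : ℝ, P y := by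
    intro y
    obtain ⟨n, hn⟩ := exists_nat_gt (|y| / |K|)
    have hnpos : 0 < (n:ℝ) := lt_of_le_of_lt (by positivity) hn
    have hn0 : (n:ℝ) ≠ 0 := ne_of_gt hnpos
    set c := y / n with hcdef
    have hcy : (n:ℝ) * c = y := by rw [hcdef]; field_simp
    have hcK : |c| ≤ |K| := by
      rw [hcdef, abs_div, abs_of_pos hnpos, div_le_iff₀ hnpos]
      rw [div_lt_iff₀ hKabs] at hn
      linarith only [hn]
    have habs1 : |c / K| ≤ 1 := by
      rw [abs_div, div_le_one hKabs]; exact hcK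
    have hPc : P c := by
      rcases le_or_gt 0 (c / K) with hcase|hcase
      · rcases eq_or_lt_of_le hcase with h|h
        · have hc0 : c = 0 := by
            field_simp [eq_comm] at h
            linarith
          rw [hc0]; exact hP0
        · have h1 : c / K ≤ 1 := le_trans (le_abs_self _) habs1
          have := stepP (c/K) h h1
          rwa [div_mul_cancel₀ _ hK] at this
      · have h1 : -(c / K) ≤ 1 := le_trans (neg_le_abs _) habs1
        have := stepM (-(c/K)) (by linarith) h1
        rw [show -(-(c/K) * K) = (c/K) * K by ring, div_mul_cancel₀ _ hK] at this
        exact this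
    have := hPnat c hPc n
    rwa [hcy] at this
  -- final assembly
  rintro ⟨a, b⟩ ⟨haI, -⟩
  rw [Metric.mem_closure_iff]
  intro ε hε
  have hεm : 0 < min ε (x₀/2) := by positivity
  rcases le_or_gt a (x₀/2) with hcase|hcase
  · obtain ⟨t, htI, ht0, htx, htε, htf⟩ := hPall (b - f a) _ hεm
    have htε' : t < ε := lt_of_lt_of_le htε (min_le_left _ _)
    have htx' : t ≤ x₀/2 := le_of_lt (lt_of_lt_of_le htε (min_le_right _ _))
    have hatI : a + t ∈ I := hI.uIcc_subset haI hx₀I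
      (mem_uIcc.2 (Or.inl ⟨by linarith, by linarith⟩))
    refine ⟨(a + t, f (a + t)), ⟨hatI, rfl⟩, ?_⟩
    rw [hadd a haI t htI hatI, Prod.dist_eq]
    refine max_lt ?_ ?_
    · rw [Real.dist_eq, abs_of_nonpos (by linarith : a - (a + t) ≤ 0)]; linarith
    · rw [Real.dist_eq]
      rw [show b - (f a + f t) = -(f t - (b - f a)) by ring, abs_neg]
      exact lt_of_lt_of_le htf (min_le_left _ _)
  · obtain ⟨t, htI, ht0, htx, htε, htf⟩ := hPall (f a - b) _ hεm
    have htε' : t < ε := lt_of_lt_of_le htε (min_le_left _ _)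
    have htx' : t ≤ x₀/2 := le_of_lt (lt_of_lt_of_le htε (min_le_right _ _))
    have hatI : a - t ∈ I := hI.uIcc_subset h0 haI
      (mem_uIcc.2 (Or.inl ⟨by linarith, by linarith⟩))
    have hfa : f a = f (a - t) + f t := by
      have := hadd (a - t) hatI t htI (by rw [sub_add_cancel]; exact haI)
      rwa [sub_add_cancel] at this
    refine ⟨(a - t, f (a - t)), ⟨hatI, rfl⟩, ?_⟩
    rw [Prod.dist_eq]
    refine max_lt ?_ ?_
    · rw [Real.dist_eq, abs_of_nonneg (by linarith : (0:ℝ) ≤ a - (a - t))]; linarith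
    · rw [Real.dist_eq]
      have h1 : f (a - t) = f a - f t := by linarith
      rw [h1, show b - (f a - f t) = f t - (f a - b) by ring]
      exact lt_of_lt_of_le htf (min_le_left _ _)

/-- If `f : I → ℝ` solves the restricted Cauchy equation and is not
of the form `f(x) = c·x`, then its graph is everywhere dense in `I × ℝ`. -/
theorem cauchy_interval_dense_graph (I : Set ℝ) (hI : I.OrdConnected)
    (h0 : (0 : ℝ) ∈ I) (hnt : ∃ x ∈ I, x ≠ 0) (f : ℝ → ℝ)
    (hadd : ∀ x ∈ I, ∀ x' ∈ I, x + x' ∈ I → f (x + x') = f x + f x')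
    (hnl : ¬ ∃ c : ℝ, ∀ x ∈ I, f x = c * x) :
    I ×ˢ (Set.univ : Set ℝ) ⊆ closure {p : ℝ × ℝ | p.1 ∈ I ∧ p.2 = f p.1} := by
  obtain ⟨x₀, hx₀I, hx₀ne⟩ := hnt
  rcases hx₀ne.lt_or_gt with hneg|hpos
  · -- reduce to the positive case by reflecting
    set I' : Set ℝ := (fun x : ℝ => -x) ⁻¹' I with hI'def
    have hmem : ∀ {x : ℝ}, x ∈ I' ↔ -x ∈ I := fun {x} => Iff.rfl
    have hI' : I'.OrdConnected := by
      constructor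
      intro x hx y hy z hz
      exact hI.out hy hx ⟨neg_le_neg hz.2, neg_le_neg hz.1⟩
    have h0' : (0:ℝ) ∈ I' := by simp only [hI'def, mem_preimage, neg_zero]; exact h0
    set g : ℝ → ℝ := fun x => f (-x) with hgdef
    have hadd' : ∀ x ∈ I', ∀ x' ∈ I', x + x' ∈ I' → g (x + x') = g x + g x' := by
      intro x hx x' hx' hxx'
      have h' := hadd (-x) hx (-x') hx' (by
        rw [show -x + -x' = -(x + x') by ring]; exact hxx')
      simp only [hgdef]
      rw [show -(x + x') = -x + -x' by ring]
      exact h'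
    have hnl' : ¬ ∃ c : ℝ, ∀ x ∈ I', g x = c * x := by
      rintro ⟨c, hc⟩
      refine hnl ⟨-c, fun x hx => ?_⟩
      have h' := hc (-x) (by simp only [hI'def, mem_preimage, neg_neg]; exact hx)
      simp only [hgdef, neg_neg] at h'
      rw [h']; ring
    have hkey := cauchy_key I' hI' h0' g hadd' hnl' (-x₀) (by simp only [hI'def, mem_preimage, neg_neg]; exact hx₀I)
      (by linarith)
    rintro ⟨a, b⟩ ⟨haI, -⟩
    have h1 : ((-a, b) : ℝ × ℝ) ∈ closure {p : ℝ × ℝ | p.1 ∈ I' ∧ p.2 = g p.1} :=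
      hkey ⟨by simp only [hI'def, mem_preimage, neg_neg]; exact haI, trivial⟩
    have hcont : Continuous (fun p : ℝ × ℝ => ((-p.1, p.2) : ℝ × ℝ)) := by continuity
    have h2 : ((a, b) : ℝ × ℝ) ∈ closure {p : ℝ × ℝ | p.1 ∈ I ∧ p.2 = f p.1} := by
      have h3 := map_mem_closure (t := {p : ℝ × ℝ | p.1 ∈ I ∧ p.2 = f p.1}) hcont h1
        (fun p hp => ⟨hp.1, hp.2⟩)
      simpa using h3
    exact h2
  · exact cauchy_key I hI h0 f hadd hnl x₀ hx₀I hpos
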